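/- For any stable family F, the structure Pr(F) with events the prime configurations [e]_x, causal order given by inclusion, and a set of primes consistent iff its union lies in F, is an event structure; moreover the map sending a configuration y of Pr(F) to ⋃y is an order isomorphism from the configurations of Pr(F) ordered by inclusion to (F, ⊆), with inverse x ↦ { [e]_x : e ∈ x }. -/

import Mathlib

universe u v w

/-- An event structure `(E, ≤, Con)`. -/
structure ES (E : Type u) where
  le : E → E → Prop
  le_refl : ∀ e, le e e
  le_trans : ∀ {a b c}, le a b → le b c → le a c
  le_antisymm : ∀ {a b}, le a b → le b a → a = b
  finitary : ∀ e, Set.Finite {e' | le e' e}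
  Con : Set E → Prop
  con_finite : ∀ {X}, Con X → X.Finite
  con_empty : Con ∅
  con_singleton : ∀ e, Con {e}
  con_mono : ∀ {X Y : Set E}, Y ⊆ X → Con X → Con Y
  con_extend : ∀ {X : Set E} {e e'}, Con X → le e e' → e' ∈ X → Con (insert e X)

namespace ES

variable {E : Type u}

/-- A configuration: consistent and down-closed. -/
def Config (S : ES E) (x : Set E) : Prop :=
  (∀ X : Set E, X ⊆ x → X.Finite → S.Con X) ∧
  ∀ ⦃e e' : E⦄, S.le e' e → e ∈ x → e' ∈ x

/-- The down-closure `[e]` of an event. -/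
def downCl (S : ES E) (e : E) : Set E := {e' | S.le e' e}

/-- The concurrency relation. -/
def Co (S : ES E) (e e' : E) : Prop :=
  S.Con {e, e'} ∧ ¬ S.le e e' ∧ ¬ S.le e' e

end ES

/-- The covering (immediate dependency) relation of an order. -/
def Covers {α : Type u} (le : α → α → Prop) (a b : α) : Prop :=
  a ≠ b ∧ le a b ∧ ∀ c, le a c → le c b → c = a ∨ c = b

/-- An event structure with polarity (`true` = Player `+`, `false` = Opponent `−`). -/
structure Game (E : Type u) extends ES E where
  pol : E → Bool

namespace Game

variable {E : Type u} {E' : Type v}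

def Config (G : Game E) : Set E → Prop := G.toES.Config

/-- The dual game: polarities reversed. -/
def dual (G : Game E) : Game E := { toES := G.toES, pol := fun e => !G.pol e }

/-- The Scott order: `y ⊑ x` iff `y⁻ ⊇ x⁻` and `y⁺ ⊆ x⁺`. -/
def ScottLE (G : Game E) (y x : Set E) : Prop :=
  {e | e ∈ x ∧ G.pol e = false} ⊆ {e | e ∈ y ∧ G.pol e = false} ∧
  {e | e ∈ y ∧ G.pol e = true} ⊆ {e | e ∈ x ∧ G.pol e = true}

/-- `x ⊆⁻ y` : inclusion with only Opponent events intervening. -/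
def subNeg (G : Game E) (x y : Set E) : Prop :=
  x ⊆ y ∧ ∀ e ∈ y, e ∉ x → G.pol e = false

/-- `x ⊆⁺ y` : inclusion with only Player events intervening. -/
def subPos (G : Game E) (x y : Set E) : Prop :=
  x ⊆ y ∧ ∀ e ∈ y, e ∉ x → G.pol e = true

/-- Race-freeness of a game. -/
def RaceFree (G : Game E) : Prop :=
  ∀ x y z, G.Config x → G.Config y → G.Config z →
    G.subNeg x y → G.subPos x z → G.Config (y ∪ z)

end Game

section StableFamilies

variable {E : Type u}

/-- A subset of a family is compatible when some member of the family bounds it. -/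
def FamCompatible (F : Set (Set E)) (Z : Set (Set E)) : Prop :=
  ∃ u ∈ F, ∀ z ∈ Z, z ⊆ u

/-- Stable families: complete, stable, finitary and coincidence-free. -/
def IsStableFamily (F : Set (Set E)) : Prop :=
  F.Nonempty ∧
  (∀ Z ⊆ F, (∀ W ⊆ Z, W.Finite → FamCompatible F W) → ⋃₀ Z ∈ F) ∧
  (∀ Z ⊆ F, Z.Nonempty → FamCompatible F Z → ⋂₀ Z ∈ F) ∧
  (∀ x ∈ F, ∀ e ∈ x, ∃ x₀ ∈ F, x₀.Finite ∧ e ∈ x₀ ∧ x₀ ⊆ x) ∧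
  (∀ x ∈ F, ∀ e ∈ x, ∀ e' ∈ x, e ≠ e' →
    ∃ x₀ ∈ F, x₀ ⊆ x ∧ (e ∈ x₀ ↔ e' ∉ x₀))

/-- The prime configuration `[e]_x` of `e` in `x`. -/
def primeConfig (F : Set (Set E)) (e : E) (x : Set E) : Set E :=
  ⋂₀ {y | y ∈ F ∧ e ∈ y ∧ y ⊆ x}

/-- The primes of a family. -/
def IsPrime (F : Set (Set E)) (p : Set E) : Prop :=
  ∃ e x, x ∈ F ∧ e ∈ x ∧ p = primeConfig F e x

end StableFamilies

section Par

variable {E : Type u} {E' : Type v}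

/-- Configurations of a parallel composition `A ∥ B` (componentwise). -/
def parConfig (A : Game E) (B : Game E') (w : Set (E ⊕ E')) : Prop :=
  A.Config (Sum.inl ⁻¹' w) ∧ B.Config (Sum.inr ⁻¹' w)

/-- Causal dependency of `A ∥ B` (componentwise). -/
def parLE (A : Game E) (B : Game E') : (E ⊕ E') → (E ⊕ E') → Prop :=
  Sum.LiftRel A.le B.le

/-- Polarity of `A⊥ ∥ B`. -/
def parPolL (A : Game E) (B : Game E') : E ⊕ E' → Bool
  | .inl a => !A.pol a
  | .inr b => B.pol b

end Par


section Stmt5Aux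

variable {E : Type u} {F : Set (Set E)}

lemma mem_primeConfig {e : E} {x : Set E} (hx : x ∈ F) (he : e ∈ x) :
    e ∈ primeConfig F e x :=
  Set.mem_sInter.2 fun _ hy => hy.2.1

lemma primeConfig_subset {e : E} {x : Set E} (hx : x ∈ F) (he : e ∈ x) :
    primeConfig F e x ⊆ x :=
  Set.sInter_subset_of_mem ⟨hx, he, subset_rfl⟩

lemma primeConfig_subset_of_mem {e : E} {x y : Set E} (hy : y ∈ F) (hey : e ∈ y)
    (hyx : y ⊆ x) : primeConfig F e x ⊆ y :=
  Set.sInter_subset_of_mem ⟨hy, hey, hyx⟩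

lemma primeConfig_mem (hF : IsStableFamily F) {e : E} {x : Set E}
    (hx : x ∈ F) (he : e ∈ x) : primeConfig F e x ∈ F := by
  obtain ⟨-, -, hstab, -, -⟩ := hF
  exact hstab _ (fun y hy => hy.1) ⟨x, hx, he, subset_rfl⟩
    ⟨x, hx, fun z hz => hz.2.2⟩

lemma primeConfig_eq (hF : IsStableFamily F) {e : E} {x v : Set E}
    (hx : x ∈ F) (he : e ∈ x) (hv : v ∈ F)
    (hsub : primeConfig F e x ⊆ v) : primeConfig F e x = primeConfig F e v := by
  have hpF := primeConfig_mem hF hx he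
  have hpe := mem_primeConfig (F := F) hx he
  apply Set.Subset.antisymm
  · intro a ha
    refine Set.mem_sInter.2 fun y hy => ?_
    obtain ⟨hyF, hey, hyv⟩ := hy
    -- y ∩ [e]_x ∈ F by stability
    obtain ⟨-, -, hstab, -, -⟩ := hF
    have hmem : y ∩ primeConfig F e x ∈ F := by
      have : ⋂₀ {y, primeConfig F e x} ∈ F := by
        apply hstab
        · intro z hz; rcases hz with rfl | hz
          · exact hyF
          · simpa using hz ▸ hpF
        · exact ⟨y, Set.mem_insert _ _⟩
        · refine ⟨v, hv, ?_⟩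
          rintro z (rfl | hz)
          · exact hyv
          · simp only [Set.mem_singleton_iff] at hz; exact hz ▸ hsub
      simpa [Set.sInter_insert] using this
    have hsub2 : primeConfig F e x ⊆ y ∩ primeConfig F e x :=
      primeConfig_subset_of_mem hmem ⟨hey, hpe⟩
        (fun a ha => primeConfig_subset hx he ha.2)
    exact (hsub2 ha).1
  · exact primeConfig_subset_of_mem hpF hpe hsub

/-- Any prime contained in some `v ∈ F` is of the form `[e]_v`. -/
lemma prime_rep (hF : IsStableFamily F) {p v : Set E} (hp : IsPrime F p)
    (hv : v ∈ F) (hpv : p ⊆ v) : ∃ e ∈ p, p = primeConfig F e v := by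
  obtain ⟨e, x, hx, he, rfl⟩ := hp
  exact ⟨e, mem_primeConfig hx he, primeConfig_eq hF hx he hv hpv⟩

lemma prime_finite (hF : IsStableFamily F) {p : Set E} (hp : IsPrime F p) :
    p.Finite := by
  obtain ⟨e, x, hx, he, rfl⟩ := hp
  obtain ⟨-, -, -, hfin, -⟩ := hF
  obtain ⟨x₀, hx₀F, hx₀fin, hex₀, hx₀x⟩ := hfin x hx e he
  exact hx₀fin.subset (primeConfig_subset_of_mem hx₀F hex₀ hx₀x)

lemma prime_mem_F (hF : IsStableFamily F) {p : Set E} (hp : IsPrime F p) :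
    p ∈ F := by
  obtain ⟨e, x, hx, he, rfl⟩ := hp
  exact primeConfig_mem hF hx he

/-- A union of primes all bounded by members of a fixed `u ∈ F`-style bound is in `F`. -/
lemma union_primes_mem (hF : IsStableFamily F) {Y : Set (Set E)}
    (hY : Y ⊆ F)
    (hbound : ∀ W ⊆ Y, W.Finite → ∃ u ∈ F, ∀ z ∈ W, z ⊆ u) :
    ⋃₀ Y ∈ F := by
  obtain ⟨-, hcomp, -, -, -⟩ := hF
  exact hcomp Y hY hbound

lemma empty_mem_F (hF : IsStableFamily F) : (∅ : Set E) ∈ F := by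
  have := union_primes_mem hF (Y := ∅) (by simp)
    (fun W hW _ => ⟨_, hF.1.choose_spec, fun z hz => absurd (hW hz) (Set.notMem_empty z)⟩)
  simpa using this

end Stmt5Aux

/-- `Pr(F)` is an event structure, whose configurations ordered by inclusion
are order isomorphic to `(F, ⊆)` via `y ↦ ⋃ y`, with inverse
`x ↦ { [e]_x : e ∈ x }`. -/
theorem stmt5 {E : Type u} {F : Set (Set E)} (hF : IsStableFamily F) :
    ∃ P : ES {p : Set E // IsPrime F p},
      (∀ p q, P.le p q ↔ p.1 ⊆ q.1) ∧
      (∀ Z, P.Con Z ↔ Z.Finite ∧ ⋃₀ (Subtype.val '' Z) ∈ F) ∧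
      (∀ y, P.Config y → ⋃₀ (Subtype.val '' y) ∈ F) ∧
      (∀ y y', P.Config y → P.Config y' →
        (y ⊆ y' ↔ ⋃₀ (Subtype.val '' y) ⊆ ⋃₀ (Subtype.val '' y'))) ∧
      (∀ x, x ∈ F →
        P.Config {p : {p : Set E // IsPrime F p} | ∃ e ∈ x, p.1 = primeConfig F e x} ∧
        ⋃₀ (Subtype.val '' {p : {p : Set E // IsPrime F p} | ∃ e ∈ x, p.1 = primeConfig F e x}) = x) ∧
      (∀ y, P.Config y →
        {p : {p : Set E // IsPrime F p} |
          ∃ e ∈ ⋃₀ (Subtype.val '' y), p.1 = primeConfig F e (⋃₀ (Subtype.val '' y))} = y) := by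
  classical
  set Pr := {p : Set E // IsPrime F p}
  -- union of values of a set of primes
  have hvalF : ∀ p : Pr, p.1 ∈ F := fun p => prime_mem_F hF p.2
  have hunion : ∀ {Z : Set Pr} {u : Set E}, u ∈ F → (∀ p ∈ Z, p.1 ⊆ u) →
      ⋃₀ (Subtype.val '' Z) ∈ F := by
    intro Z u hu hb
    apply union_primes_mem hF
    · rintro _ ⟨p, hp, rfl⟩; exact hvalF p
    · intro W hW _
      refine ⟨u, hu, fun z hz => ?_⟩
      obtain ⟨p, hp, rfl⟩ := hW hz
      exact hb p hp
  -- configurations yield unions in F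
  have hP : ∀ P : ES Pr, (∀ p q, P.le p q ↔ p.1 ⊆ q.1) →
      (∀ Z, P.Con Z ↔ Z.Finite ∧ ⋃₀ (Subtype.val '' Z) ∈ F) → True := fun _ _ _ => trivial
  refine ⟨{ le := fun p q => p.1 ⊆ q.1
            le_refl := fun _ => subset_rfl
            le_trans := fun h1 h2 => h1.trans h2
            le_antisymm := fun h1 h2 => Subtype.ext (h1.antisymm h2)
            finitary := ?_
            Con := fun Z => Z.Finite ∧ ⋃₀ (Subtype.val '' Z) ∈ F
            con_finite := fun h => h.1
            con_empty := ⟨Set.finite_empty, by simpa using empty_mem_F hF⟩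
            con_mono := ?_
            con_singleton := fun p => ⟨Set.finite_singleton p, by
              simpa using hvalF p⟩
            con_extend := ?_ }, ?_, ?_, ?_, ?_, ?_, ?_⟩
  · -- finitary
    intro p
    have hpfin : p.1.Finite := prime_finite hF p.2
    have : {q : Pr | q.1 ⊆ p.1} = Subtype.val ⁻¹' {t | t ⊆ p.1} := rfl
    rw [this]
    exact Set.Finite.preimage (Set.injOn_of_injective Subtype.val_injective)
      hpfin.finite_subsets
  · -- con_mono
    rintro X Y hYX ⟨hXfin, hXF⟩
    refine ⟨hXfin.subset hYX, hunion hXF ?_⟩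
    intro p hp
    exact Set.subset_sUnion_of_mem ⟨p, hYX hp, rfl⟩
  · -- con_extend
    rintro X p q ⟨hXfin, hXF⟩ hle hqX
    refine ⟨hXfin.insert p, ?_⟩
    have : ⋃₀ (Subtype.val '' insert p X) = ⋃₀ (Subtype.val '' X) := by
      apply Set.Subset.antisymm
      · apply Set.sUnion_subset
        rintro _ ⟨r, (rfl | hr), rfl⟩
        · exact hle.trans (Set.subset_sUnion_of_mem ⟨q, hqX, rfl⟩)
        · exact Set.subset_sUnion_of_mem ⟨r, hr, rfl⟩
      · exact Set.sUnion_subset_sUnion (Set.image_mono (Set.subset_insert _ _))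
    rw [this]; exact hXF
  · -- le characterization
    exact fun p q => Iff.rfl
  · -- Con characterization
    exact fun Z => Iff.rfl
  · -- configs give unions in F
    intro y hy
    apply union_primes_mem hF
    · rintro _ ⟨p, hp, rfl⟩; exact hvalF p
    · intro W hW hWfin
      -- pull back to a finite subset of y
      set W₀ : Set Pr := y ∩ (Subtype.val ⁻¹' W) with hW₀
      have hW₀fin : W₀.Finite :=
        (hWfin.preimage (Set.injOn_of_injective Subtype.val_injective)).subset
          Set.inter_subset_right
      have hcon := hy.1 W₀ Set.inter_subset_left hW₀fin
      refine ⟨⋃₀ (Subtype.val '' W₀), hcon.2, fun z hz => ?_⟩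
      obtain ⟨p, hp, rfl⟩ := hW hz
      exact Set.subset_sUnion_of_mem ⟨p, ⟨hp, hz⟩, rfl⟩
  · -- order iso on configs
    intro y y' hy hy'
    constructor
    · intro hsub
      exact Set.sUnion_subset_sUnion (Set.image_mono hsub)
    · intro hUsub p hp
      -- p's value is contained in the union of y'
      have hu' : ⋃₀ (Subtype.val '' y') ∈ F := by
        apply union_primes_mem hF
        · rintro _ ⟨q, hq, rfl⟩; exact hvalF q
        · intro W hW hWfin
          set W₀ : Set Pr := y' ∩ (Subtype.val ⁻¹' W)
          have hW₀fin : W₀.Finite :=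
            (hWfin.preimage (Set.injOn_of_injective Subtype.val_injective)).subset
              Set.inter_subset_right
          have hcon := hy'.1 W₀ Set.inter_subset_left hW₀fin
          refine ⟨⋃₀ (Subtype.val '' W₀), hcon.2, fun z hz => ?_⟩
          obtain ⟨q, hq, rfl⟩ := hW hz
          exact Set.subset_sUnion_of_mem ⟨q, ⟨hq, hz⟩, rfl⟩
      have hpu : p.1 ⊆ ⋃₀ (Subtype.val '' y') :=
        (Set.subset_sUnion_of_mem (Set.mem_image_of_mem Subtype.val hp)).trans hUsub
      obtain ⟨e, hep, hrep⟩ := prime_rep hF p.2 hu' hpu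
      have heu : e ∈ ⋃₀ (Subtype.val '' y') := hpu hep
      obtain ⟨_, ⟨q, hq, rfl⟩, heq⟩ := heu
      have hple : p.1 ⊆ q.1 := by
        rw [hrep]
        exact primeConfig_subset_of_mem (hvalF q) heq
          (Set.subset_sUnion_of_mem ⟨q, hq, rfl⟩)
      exact hy'.2 hple hq
  · -- x ↦ { [e]_x : e ∈ x } is a config with union x
    intro x hx
    set yx : Set Pr := {p | ∃ e ∈ x, p.1 = primeConfig F e x} with hyx
    have hb : ∀ p ∈ yx, p.1 ⊆ x := by
      rintro p ⟨e, he, hpe⟩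
      rw [hpe]; exact primeConfig_subset hx he
    have hUx : ⋃₀ (Subtype.val '' yx) = x := by
      apply Set.Subset.antisymm
      · apply Set.sUnion_subset
        rintro _ ⟨p, hp, rfl⟩; exact hb p hp
      · intro e he
        exact Set.mem_sUnion.2 ⟨primeConfig F e x, ⟨⟨primeConfig F e x, ⟨e, x, hx, he, rfl⟩⟩,
          ⟨e, he, rfl⟩, rfl⟩, mem_primeConfig hx he⟩
    refine ⟨⟨?_, ?_⟩, hUx⟩
    · intro X hX hXfin
      refine ⟨hXfin, hunion hx ?_⟩
      intro p hp; exact hb p (hX hp)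
    · rintro p q hle hq
      have hqx : q.1 ⊆ x := hle.trans (hb p hq)
      obtain ⟨e, hep, hrep⟩ := prime_rep hF q.2 hx hqx
      exact ⟨e, hqx hep, hrep⟩
  · -- inverse: config recovered from its union
    intro y hy
    set u := ⋃₀ (Subtype.val '' y) with hu
    have huF : u ∈ F := by
      apply union_primes_mem hF
      · rintro _ ⟨q, hq, rfl⟩; exact hvalF q
      · intro W hW hWfin
        set W₀ : Set Pr := y ∩ (Subtype.val ⁻¹' W)
        have hW₀fin : W₀.Finite :=
          (hWfin.preimage (Set.injOn_of_injective Subtype.val_injective)).subset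
            Set.inter_subset_right
        have hcon := hy.1 W₀ Set.inter_subset_left hW₀fin
        refine ⟨⋃₀ (Subtype.val '' W₀), hcon.2, fun z hz => ?_⟩
        obtain ⟨q, hq, rfl⟩ := hW hz
        exact Set.subset_sUnion_of_mem ⟨q, ⟨hq, hz⟩, rfl⟩
    apply Set.Subset.antisymm
    · rintro p ⟨e, heu, hrep⟩
      obtain ⟨_, ⟨q, hq, rfl⟩, heq⟩ := heu
      have hple : p.1 ⊆ q.1 := by
        rw [hrep]
        exact primeConfig_subset_of_mem (hvalF q) heq
          (Set.subset_sUnion_of_mem ⟨q, hq, rfl⟩)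
      exact hy.2 hple hq
    · intro p hp
      have hpu : p.1 ⊆ u := Set.subset_sUnion_of_mem ⟨p, hp, rfl⟩
      obtain ⟨e, hep, hrep⟩ := prime_rep hF p.2 huF hpu
      exact ⟨e, hpu hep, hrep⟩
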